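/- If the edgewise subdivision sd X of a simplicial set X is Segal, then the lower décalage dec_⊥X is Segal. (This follows because for each n ≥ 1 the Segal square of dec_⊥X is a retract, via the simplicial map dec_⊥X → sd X given in degree n by s_0^n : X_{n+1} → X_{2n+1} and the retraction given by iterated faces d_1^n and d_0 ∘ d_2^{n-1}, of the corresponding Segal square of sd X, and pullbacks of sets are stable under retracts.) -/

import Mathlib

open CategoryTheory Simplicial

universe u

/-- A commuting square of sets (top `f`, left `g`, right `h`, bottom `k`) is a pullback
if the canonical map to the fiber product is a bijection. -/
def IsPullbackSet {A B C D : Type u} (f : A → B) (g : A → C) (h : B → D) (k : C → D) : Prop :=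
  (∀ a, h (f a) = k (g a)) ∧ ∀ (b : B) (c : C), h b = k c → ∃! a : A, f a = b ∧ g a = c

/-- The Segal condition for the edgewise subdivision `sd X` (which has `(sd X)_n = X_{2n+1}`,
with `i`-th face `d_{n-i} ∘ d_{n+i+1} : X_{2n+1} → X_{2n-1}` for `0 ≤ i ≤ n`), stated
explicitly in terms of `X`: for every `n ≥ 1` (here `n = m + 1`), the Segal square of `sd X`
with top `d_0`, left `d_{n+1}`, right `d_n`, bottom `d_0` is the square with
top `d_{m+2} ∘ d_{m+3} : X_{2m+5} → X_{2m+3}`, left `d_0 ∘ d_{2m+5} : X_{2m+5} → X_{2m+3}`,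
right `d_0 ∘ d_{2m+3} : X_{2m+3} → X_{2m+1}`, bottom `d_{m+1} ∘ d_{m+2}`. -/
def SdSegal (X : SSet.{u}) : Prop :=
  ∀ m : ℕ,
    IsPullbackSet
      (fun x => X.δ (⟨m + 2, by omega⟩ : Fin (2 * m + 5))
        (X.δ (⟨m + 3, by omega⟩ : Fin (2 * m + 6)) x))
      (fun x => X.δ (⟨0, by omega⟩ : Fin (2 * m + 5))
        (X.δ (⟨2 * m + 5, by omega⟩ : Fin (2 * m + 6)) x))
      (fun x => X.δ (⟨0, by omega⟩ : Fin (2 * m + 3))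
        (X.δ (⟨2 * m + 3, by omega⟩ : Fin (2 * m + 4)) x))
      (fun x => X.δ (⟨m + 1, by omega⟩ : Fin (2 * m + 3))
        (X.δ (⟨m + 2, by omega⟩ : Fin (2 * m + 4)) x))

/-- The Segal condition for the lower décalage `dec⊥ X` (which has `(dec⊥ X)_n = X_{n+1}`,
with `k`-th face `d_{k+1} : X_{n+1} → X_n` for `0 ≤ k ≤ n`), stated explicitly in terms
of `X`. -/
def LowerDecSegal (X : SSet.{u}) : Prop :=
  ∀ m : ℕ,
    IsPullbackSet
      (fun x => X.δ (1 : Fin (m + 4)) x)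
      (fun x => X.δ (⟨m + 3, by omega⟩ : Fin (m + 4)) x)
      (fun x => X.δ (⟨m + 2, by omega⟩ : Fin (m + 3)) x)
      (fun x => X.δ (1 : Fin (m + 3)) x)

namespace SdDecAux

open SimplexCategory Opposite

/-- The degree-`(m+3)` component `s_0^{m+2}` (collapsing `{0,…,m+2}` to `0`) of the
simplicial map `dec⊥ X → sd X`, as a morphism in the simplex category. -/
def Amap (m : ℕ) : (⦋2*m+5⦌ : SimplexCategory) ⟶ ⦋m+3⦌ :=
  SimplexCategory.mkHom ⟨fun i => ⟨i.1 - (m+2), by omega⟩, fun i j hij => by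
    simp only [Fin.mk_le_mk]; exact Nat.sub_le_sub_right hij _⟩

/-- The degree-`(m+2)` component `s_0^{m+1}`. -/
def Bmap (m : ℕ) : (⦋2*m+3⦌ : SimplexCategory) ⟶ ⦋m+2⦌ :=
  SimplexCategory.mkHom ⟨fun i => ⟨i.1 - (m+1), by omega⟩, fun i j hij => by
    simp only [Fin.mk_le_mk]; exact Nat.sub_le_sub_right hij _⟩

/-- The degree-`(m+1)` component `s_0^m`. -/
def Dmap (m : ℕ) : (⦋2*m+1⦌ : SimplexCategory) ⟶ ⦋m+1⦌ :=
  SimplexCategory.mkHom ⟨fun i => ⟨i.1 - m, by omega⟩, fun i j hij => by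
    simp only [Fin.mk_le_mk]; exact Nat.sub_le_sub_right hij _⟩

/-- Retraction at corner `A`: the injection `[m+3] ↪ [2m+5]` with image `{1, m+3, …, 2m+5}`. -/
def RAmap (m : ℕ) : (⦋m+3⦌ : SimplexCategory) ⟶ ⦋2*m+5⦌ :=
  SimplexCategory.mkHom ⟨fun i => ⟨if i.1 = 0 then 1 else m+2+i.1, by split <;> omega⟩,
    fun i j hij => by
      simp only [Fin.mk_le_mk]
      have := Fin.le_def.mp hij
      split_ifs <;> omega⟩

/-- Retraction at corner `B`: the injection `[m+2] ↪ [2m+3]` with image `{1, m+2, …, 2m+3}`. -/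
def RBmap (m : ℕ) : (⦋m+2⦌ : SimplexCategory) ⟶ ⦋2*m+3⦌ :=
  SimplexCategory.mkHom ⟨fun i => ⟨if i.1 = 0 then 1 else m+1+i.1, by split <;> omega⟩,
    fun i j hij => by
      simp only [Fin.mk_le_mk]
      have := Fin.le_def.mp hij
      split_ifs <;> omega⟩

/-- Retraction at corner `C`: the injection `[m+2] ↪ [2m+3]` with image `{0, m+2, …, 2m+3}`. -/
def RCmap (m : ℕ) : (⦋m+2⦌ : SimplexCategory) ⟶ ⦋2*m+3⦌ :=
  SimplexCategory.mkHom ⟨fun i => ⟨if i.1 = 0 then 0 else m+1+i.1, by split <;> omega⟩,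
    fun i j hij => by
      simp only [Fin.mk_le_mk]
      have := Fin.le_def.mp hij
      split_ifs <;> omega⟩

/-- Functoriality of `X` on composable (opposites of) simplex category maps. -/
lemma mm (X : SSet.{u}) {a b c : SimplexCategory} (f : b ⟶ c) (g : a ⟶ b)
    (x : X.obj (op c)) :
    X.map g.op (X.map f.op x) = X.map ((g ≫ f).op) x := by
  rw [op_comp, FunctorToTypes.map_comp_apply]

/- The relations in the simplex category. -/

lemma LI0 (m : ℕ) :
    SimplexCategory.δ (⟨m+2, by omega⟩ : Fin (m+3)) ≫ SimplexCategory.δ (1 : Fin (m+4))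
      = SimplexCategory.δ (1 : Fin (m+3)) ≫ SimplexCategory.δ (⟨m+3, by omega⟩ : Fin (m+4)) := by
  ext j
  simp [SimplexCategory.δ, Fin.succAbove, Fin.lt_def, Fin.le_def, -Fin.val_fin_lt, -Fin.val_fin_le]
  split_ifs <;> simp_all [Fin.ext_iff, -Fin.val_eq_zero_iff] <;> omega

lemma LI1 (m : ℕ) :
    SimplexCategory.δ (⟨m+2, by omega⟩ : Fin (2*m+5)) ≫
        SimplexCategory.δ (⟨m+3, by omega⟩ : Fin (2*m+6)) ≫ Amap m
      = Bmap m ≫ SimplexCategory.δ (1 : Fin (m+4)) := by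
  ext j
  simp [SimplexCategory.δ, Amap, Bmap, SimplexCategory.mkHom, Fin.succAbove,
    Fin.lt_def, Fin.le_def, -Fin.val_fin_lt, -Fin.val_fin_le]
  dsimp [DFunLike.coe]
  split_ifs <;> simp_all [Fin.ext_iff, -Fin.val_eq_zero_iff] <;> omega

lemma LI2 (m : ℕ) :
    SimplexCategory.δ (⟨0, by omega⟩ : Fin (2*m+5)) ≫
        SimplexCategory.δ (⟨2*m+5, by omega⟩ : Fin (2*m+6)) ≫ Amap m
      = Bmap m ≫ SimplexCategory.δ (⟨m+3, by omega⟩ : Fin (m+4)) := by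
  ext j
  simp [SimplexCategory.δ, Amap, Bmap, SimplexCategory.mkHom, Fin.succAbove,
    Fin.lt_def, Fin.le_def, -Fin.val_fin_lt, -Fin.val_fin_le]
  dsimp [DFunLike.coe]
  omega

lemma LI3 (m : ℕ) :
    SimplexCategory.δ (⟨0, by omega⟩ : Fin (2*m+3)) ≫
        SimplexCategory.δ (⟨2*m+3, by omega⟩ : Fin (2*m+4)) ≫ Bmap m
      = Dmap m ≫ SimplexCategory.δ (⟨m+2, by omega⟩ : Fin (m+3)) := by
  ext j
  simp [SimplexCategory.δ, Bmap, Dmap, SimplexCategory.mkHom, Fin.succAbove,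
    Fin.lt_def, Fin.le_def, -Fin.val_fin_lt, -Fin.val_fin_le]
  dsimp [DFunLike.coe]
  omega

lemma LI4 (m : ℕ) :
    SimplexCategory.δ (⟨m+1, by omega⟩ : Fin (2*m+3)) ≫
        SimplexCategory.δ (⟨m+2, by omega⟩ : Fin (2*m+4)) ≫ Bmap m
      = Dmap m ≫ SimplexCategory.δ (1 : Fin (m+3)) := by
  ext j
  simp [SimplexCategory.δ, Bmap, Dmap, SimplexCategory.mkHom, Fin.succAbove,
    Fin.lt_def, Fin.le_def, -Fin.val_fin_lt, -Fin.val_fin_le]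
  dsimp [DFunLike.coe]
  split_ifs <;> simp_all [Fin.ext_iff, -Fin.val_eq_zero_iff] <;> omega

lemma LR1 (m : ℕ) : RAmap m ≫ Amap m = 𝟙 _ := by
  ext j
  simp [Amap, RAmap, SimplexCategory.mkHom, -Fin.val_fin_lt, -Fin.val_fin_le]
  dsimp [DFunLike.coe]
  split_ifs with h <;> simp only [Fin.ext_iff, Fin.val_zero] at h <;> omega

lemma LR2 (m : ℕ) : RBmap m ≫ Bmap m = 𝟙 _ := by
  ext j
  simp [Bmap, RBmap, SimplexCategory.mkHom, -Fin.val_fin_lt, -Fin.val_fin_le]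
  dsimp [DFunLike.coe]
  split_ifs with h <;> simp only [Fin.ext_iff, Fin.val_zero] at h <;> omega

lemma LR3 (m : ℕ) : RCmap m ≫ Bmap m = 𝟙 _ := by
  ext j
  simp [Bmap, RCmap, SimplexCategory.mkHom, -Fin.val_fin_lt, -Fin.val_fin_le]
  dsimp [DFunLike.coe]
  split_ifs with h <;> simp only [Fin.ext_iff, Fin.val_zero] at h <;> omega

lemma LR4 (m : ℕ) :
    SimplexCategory.δ (1 : Fin (m+4)) ≫ RAmap m
      = RBmap m ≫ SimplexCategory.δ (⟨m+2, by omega⟩ : Fin (2*m+5)) ≫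
          SimplexCategory.δ (⟨m+3, by omega⟩ : Fin (2*m+6)) := by
  ext j
  simp [SimplexCategory.δ, RAmap, RBmap, SimplexCategory.mkHom, Fin.succAbove,
    Fin.lt_def, Fin.le_def, apply_ite Fin.val, -Fin.val_fin_lt, -Fin.val_fin_le]
  split_ifs <;> simp_all [Fin.ext_iff, -Fin.val_eq_zero_iff] <;> omega

lemma LR5 (m : ℕ) :
    SimplexCategory.δ (⟨m+3, by omega⟩ : Fin (m+4)) ≫ RAmap m
      = RCmap m ≫ SimplexCategory.δ (⟨0, by omega⟩ : Fin (2*m+5)) ≫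
          SimplexCategory.δ (⟨2*m+5, by omega⟩ : Fin (2*m+6)) := by
  ext j
  simp [SimplexCategory.δ, RAmap, RCmap, SimplexCategory.mkHom, Fin.succAbove,
    Fin.lt_def, Fin.le_def, apply_ite Fin.val, -Fin.val_fin_lt, -Fin.val_fin_le]
  split_ifs <;> simp_all [Fin.ext_iff, -Fin.val_eq_zero_iff] <;> omega

variable (X : SSet.{u}) (m : ℕ)

/- The relations applied to simplices of `X`. -/

lemma aI0 (a : X _⦋m+3⦌) :
    X.δ (⟨m+2, by omega⟩ : Fin (m+3)) (X.δ (1 : Fin (m+4)) a)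
      = X.δ (1 : Fin (m+3)) (X.δ (⟨m+3, by omega⟩ : Fin (m+4)) a) := by
  simp only [SimplicialObject.δ, mm, Category.assoc, LI0]

lemma aI1 (x : X _⦋m+3⦌) :
    X.δ (⟨m+2, by omega⟩ : Fin (2*m+5)) (X.δ (⟨m+3, by omega⟩ : Fin (2*m+6))
        (X.map (Amap m).op x))
      = X.map (Bmap m).op (X.δ (1 : Fin (m+4)) x) := by
  simp only [SimplicialObject.δ, mm, Category.assoc, LI1]

lemma aI2 (x : X _⦋m+3⦌) :
    X.δ (⟨0, by omega⟩ : Fin (2*m+5)) (X.δ (⟨2*m+5, by omega⟩ : Fin (2*m+6))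
        (X.map (Amap m).op x))
      = X.map (Bmap m).op (X.δ (⟨m+3, by omega⟩ : Fin (m+4)) x) := by
  simp only [SimplicialObject.δ, mm, Category.assoc, LI2]

lemma aI3 (x : X _⦋m+2⦌) :
    X.δ (⟨0, by omega⟩ : Fin (2*m+3)) (X.δ (⟨2*m+3, by omega⟩ : Fin (2*m+4))
        (X.map (Bmap m).op x))
      = X.map (Dmap m).op (X.δ (⟨m+2, by omega⟩ : Fin (m+3)) x) := by
  simp only [SimplicialObject.δ, mm, Category.assoc, LI3]

lemma aI4 (x : X _⦋m+2⦌) :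
    X.δ (⟨m+1, by omega⟩ : Fin (2*m+3)) (X.δ (⟨m+2, by omega⟩ : Fin (2*m+4))
        (X.map (Bmap m).op x))
      = X.map (Dmap m).op (X.δ (1 : Fin (m+3)) x) := by
  simp only [SimplicialObject.δ, mm, Category.assoc, LI4]

lemma aR1 (x : X _⦋m+3⦌) : X.map (RAmap m).op (X.map (Amap m).op x) = x := by
  rw [mm, LR1, op_id, FunctorToTypes.map_id_apply]

lemma aR2 (x : X _⦋m+2⦌) : X.map (RBmap m).op (X.map (Bmap m).op x) = x := by
  rw [mm, LR2, op_id, FunctorToTypes.map_id_apply]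

lemma aR3 (x : X _⦋m+2⦌) : X.map (RCmap m).op (X.map (Bmap m).op x) = x := by
  rw [mm, LR3, op_id, FunctorToTypes.map_id_apply]

lemma aR4 (y : X _⦋2*m+5⦌) :
    X.δ (1 : Fin (m+4)) (X.map (RAmap m).op y)
      = X.map (RBmap m).op (X.δ (⟨m+2, by omega⟩ : Fin (2*m+5))
          (X.δ (⟨m+3, by omega⟩ : Fin (2*m+6)) y)) := by
  simp only [SimplicialObject.δ, mm, Category.assoc, LR4]

lemma aR5 (y : X _⦋2*m+5⦌) :
    X.δ (⟨m+3, by omega⟩ : Fin (m+4)) (X.map (RAmap m).op y)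
      = X.map (RCmap m).op (X.δ (⟨0, by omega⟩ : Fin (2*m+5))
          (X.δ (⟨2*m+5, by omega⟩ : Fin (2*m+6)) y)) := by
  simp only [SimplicialObject.δ, mm, Category.assoc, LR5]

end SdDecAux

open SdDecAux Opposite

/-- If the edgewise subdivision `sd X` of a simplicial set `X` is Segal, then the lower
décalage `dec⊥ X` is Segal. -/
theorem sdSegal_implies_lowerDecSegal (X : SSet.{u}) (h : SdSegal X) : LowerDecSegal X := by
  intro m
  obtain ⟨-, hlift⟩ := h m
  refine ⟨fun a => aI0 X m a, fun b c hbc => ?_⟩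
  have hbc0 : X.δ (⟨m+2, by omega⟩ : Fin (m+3)) b = X.δ (1 : Fin (m+3)) c := hbc
  have hbc' : X.δ (⟨0, by omega⟩ : Fin (2*m+3)) (X.δ (⟨2*m+3, by omega⟩ : Fin (2*m+4))
        (X.map (Bmap m).op b))
      = X.δ (⟨m+1, by omega⟩ : Fin (2*m+3)) (X.δ (⟨m+2, by omega⟩ : Fin (2*m+4))
        (X.map (Bmap m).op c)) := by
    rw [aI3, aI4, hbc0]
  obtain ⟨a', ⟨ha1, ha2⟩, hu⟩ := hlift (X.map (Bmap m).op b) (X.map (Bmap m).op c) hbc'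
  have ha1' : X.δ (⟨m+2, by omega⟩ : Fin (2*m+5)) (X.δ (⟨m+3, by omega⟩ : Fin (2*m+6)) a')
      = X.map (Bmap m).op b := ha1
  have ha2' : X.δ (⟨0, by omega⟩ : Fin (2*m+5)) (X.δ (⟨2*m+5, by omega⟩ : Fin (2*m+6)) a')
      = X.map (Bmap m).op c := ha2
  refine ⟨X.map (RAmap m).op a', ⟨?_, ?_⟩, ?_⟩
  · show X.δ (1 : Fin (m+4)) (X.map (RAmap m).op a') = b
    rw [aR4, ha1', aR2]
  · show X.δ (⟨m+3, by omega⟩ : Fin (m+4)) (X.map (RAmap m).op a') = c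
    rw [aR5, ha2', aR3]
  · rintro a ⟨hf, hg⟩
    have hf' : X.δ (1 : Fin (m+4)) a = b := hf
    have hg' : X.δ (⟨m+3, by omega⟩ : Fin (m+4)) a = c := hg
    have h1 : X.δ (⟨m+2, by omega⟩ : Fin (2*m+5)) (X.δ (⟨m+3, by omega⟩ : Fin (2*m+6))
        (X.map (Amap m).op a)) = X.map (Bmap m).op b := by rw [aI1, hf']
    have h2 : X.δ (⟨0, by omega⟩ : Fin (2*m+5)) (X.δ (⟨2*m+5, by omega⟩ : Fin (2*m+6))
        (X.map (Amap m).op a)) = X.map (Bmap m).op c := by rw [aI2, hg']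
    have ha := hu (X.map (Amap m).op a) ⟨h1, h2⟩
    calc a = X.map (RAmap m).op (X.map (Amap m).op a) := (aR1 X m a).symm
      _ = X.map (RAmap m).op a' := by rw [ha]
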